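/- Let D be a symmetric matrix with Tr(D) = 0 and D_cmds the EDM returned by classical MDS in dimension r. Then (ξ(D) - ξ(D_cmds))^2 = (Σ_i λ̄_i)^2, where λ̄_i are the discarded eigenvalues of D̂ (those with λ_i > 0 or index > r in increasing order) and ξ(·) denotes the (n,n) entry after conjugation by the Householder reflector Q. -/

import Mathlib

open Matrix

lemma cmds_aux_sum {N : ℕ} (M : Matrix (Fin N) (Fin N) ℝ) :
    ∑ i, ∑ j, (M i i + M j j - 2 * M i j)
      = (N:ℝ) * (∑ i, M i i) + (N:ℝ) * (∑ i, M i i) - 2 * ∑ i, ∑ j, M i j := by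
  have h1 : ∀ x : ℝ, ∑ _j : Fin N, x = (N:ℝ) * x := by
    intro x; rw [Finset.sum_const]; simp [Finset.card_univ]
  calc ∑ i, ∑ j, (M i i + M j j - 2 * M i j)
      = ∑ i, ((N:ℝ) * M i i + (∑ j, M j j) - 2 * ∑ j, M i j) := by
        apply Finset.sum_congr rfl; intro i _
        rw [Finset.sum_sub_distrib, Finset.sum_add_distrib, h1, ← Finset.mul_sum]
    _ = (N:ℝ) * (∑ i, M i i) + (N:ℝ) * (∑ i, M i i) - 2 * ∑ i, ∑ j, M i j := by
        rw [Finset.sum_sub_distrib, Finset.sum_add_distrib, ← Finset.mul_sum, h1,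
          ← Finset.mul_sum]

theorem cmds_xi_diff_sq (n r : ℕ) (D : Matrix (Fin (n + 1)) (Fin (n + 1)) ℝ)
    (hsymm : D.IsSymm) (htrace : D.trace = 0) :
    let v : Fin (n + 1) → ℝ := fun i => if i = Fin.last n then 1 + Real.sqrt (n + 1) else 1
    let Q : Matrix (Fin (n + 1)) (Fin (n + 1)) ℝ := 1 - (2 / (v ⬝ᵥ v)) • vecMulVec v v
    let Dhat : Matrix (Fin n) (Fin n) ℝ :=
      Matrix.of fun i j => (Q * D * Q) i.castSucc j.castSucc
    ∀ (U : Matrix (Fin n) (Fin n) ℝ) (l : Fin n → ℝ),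
      Uᵀ * U = 1 → (∀ i j : Fin n, i ≤ j → l i ≤ l j) →
      Dhat = U * Matrix.diagonal l * Uᵀ →
      let Ub : Matrix (Fin (n + 1)) (Fin (n + 1)) ℝ :=
        Matrix.of fun i j =>
          Fin.lastCases (Fin.lastCases (1 : ℝ) (fun _ => (0 : ℝ)) j)
            (fun i' => Fin.lastCases (0 : ℝ) (fun j' => U i' j') j) i
      let S : Matrix (Fin (n + 1)) (Fin (n + 1)) ℝ := Q * Ub
      let lamBar : Fin (n + 1) → ℝ := fun i =>
        Fin.lastCases (0 : ℝ)
          (fun i' => if l i' > 0 ∨ r < (i' : ℕ) + 1 then l i' else 0) i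
      let mu : Fin (n + 1) → ℝ := fun i =>
        Fin.lastCases (0 : ℝ)
          (fun i' => if l i' > 0 ∨ r < (i' : ℕ) + 1 then 0 else -(l i') / 2) i
      let Y : Matrix (Fin (n + 1)) (Fin (n + 1)) ℝ := S * Matrix.diagonal mu * Sᵀ
      let Dcmds : Matrix (Fin (n + 1)) (Fin (n + 1)) ℝ :=
        Matrix.of fun i j => Y i i + Y j j - 2 * Y i j
      let C1 : ℝ := ∑ i, (lamBar i) ^ 2
      let C2 : ℝ := -∑ i, lamBar i
      ((Q * D * Q) (Fin.last n) (Fin.last n) -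
          (Q * Dcmds * Q) (Fin.last n) (Fin.last n)) ^ 2 = C2 ^ 2 := by
  set_option maxHeartbeats 2000000 in
  intro v Q Dhat U l hU hmono hDhat Ub S lamBar mu Y Dcmds C1 C2
  set α : ℝ := Real.sqrt (n + 1) with hαdef
  have hα0 : (0:ℝ) < α := Real.sqrt_pos.2 (by positivity)
  have hα2 : α ^ 2 = (n:ℝ) + 1 := Real.sq_sqrt (by positivity)
  have hα0' : α ≠ 0 := hα0.ne'
  have hv : v = fun i => if i = Fin.last n then 1 + α else 1 := rfl
  have hmu_def : mu = fun i => Fin.lastCases (0 : ℝ)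
      (fun i' => if l i' > 0 ∨ r < (i' : ℕ) + 1 then 0 else -(l i') / 2) i := rfl
  have hlam_def : lamBar = fun i => Fin.lastCases (0 : ℝ)
      (fun i' => if l i' > 0 ∨ r < (i' : ℕ) + 1 then l i' else 0) i := rfl
  have hvlt : ∀ i : Fin n, v i.castSucc = 1 := fun i => by
    rw [hv]; exact if_neg (Fin.castSucc_lt_last i).ne
  have hvlast : v (Fin.last n) = 1 + α := by rw [hv]; simp
  -- dot product
  have hsumv : ∑ i, v i = α ^ 2 + α := by
    rw [Fin.sum_univ_castSucc]
    simp only [hvlt, hvlast, Finset.sum_const, Finset.card_univ, Fintype.card_fin,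
      nsmul_eq_mul, mul_one]
    rw [hα2]; ring
  have hvv : v ⬝ᵥ v = 2 * (α ^ 2 + α) := by
    simp only [dotProduct]
    rw [Fin.sum_univ_castSucc]
    simp only [hvlt, hvlast, mul_one, Finset.sum_const, Finset.card_univ, Fintype.card_fin,
      nsmul_eq_mul]
    nlinarith [hα2]
  have hαα : α ^ 2 + α ≠ 0 := by positivity
  have hc : 2 / (v ⬝ᵥ v) = 1 / (α ^ 2 + α) := by
    rw [hvv]; field_simp
  -- entries of Q
  have hQ : Q = 1 - (2 / (v ⬝ᵥ v)) • vecMulVec v v := rfl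
  have hQe : ∀ i j, Q i j = (if i = j then (1:ℝ) else 0) - (1 / (α ^ 2 + α)) * (v i * v j) := by
    intro i j
    rw [hQ, hc]
    simp [Matrix.sub_apply, Matrix.smul_apply, vecMulVec_apply, one_apply]
  -- Q is symmetric
  have hQsymm : Qᵀ = Q := by
    ext i j
    rw [transpose_apply, hQe, hQe]
    rcases eq_or_ne i j with h | h
    · subst h; ring
    · rw [if_neg h, if_neg (Ne.symm h)]; ring
  -- last row of Q
  have hQlast : ∀ j, Q (Fin.last n) j = -(1 / α) := by
    intro j
    rw [hQe, hvlast]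
    rcases eq_or_ne j (Fin.last n) with h | h
    · rw [h, hvlast, if_pos rfl]
      field_simp
      ring
    · have hvj : v j = 1 := by rw [hv]; exact if_neg h
      rw [hvj, if_neg (by simpa [eq_comm] using h)]
      field_simp
      ring
  have hQlast' : ∀ j, Q j (Fin.last n) = -(1 / α) := by
    intro j; rw [← hQsymm, transpose_apply]; exact hQlast j
  -- column sums of Q
  have hQcolsum : ∀ p, ∑ i, Q i p = if p = Fin.last n then -α else 0 := by
    intro p
    have h1 : ∑ x, 1 / (α ^ 2 + α) * (v x * v p) = v p := by
      rw [← Finset.mul_sum, ← Finset.sum_mul, hsumv]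
      field_simp
    simp only [hQe]
    rw [Finset.sum_sub_distrib, h1, Finset.sum_ite_eq' Finset.univ p (fun _ => (1:ℝ))]
    rcases eq_or_ne p (Fin.last n) with h | h
    · rw [if_pos h, h, hvlast]; simp
    · rw [if_neg h]
      have : v p = 1 := by rw [hv]; exact if_neg h
      simp [this]
  -- Q * Q = 1
  have hvv0 : v ⬝ᵥ v ≠ 0 := by rw [hvv]; positivity
  have hVV : vecMulVec v v * vecMulVec v v = (v ⬝ᵥ v) • vecMulVec v v := by
    ext i j
    simp only [mul_apply, vecMulVec_apply, Matrix.smul_apply, smul_eq_mul, dotProduct]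
    calc ∑ k, v i * v k * (v k * v j) = ∑ k, v k * v k * (v i * v j) := by
          apply Finset.sum_congr rfl; intro k _; ring
      _ = (∑ k, v k * v k) * (v i * v j) := by rw [Finset.sum_mul]
  have hQQ : Q * Q = 1 := by
    have hcc : 2 / (v ⬝ᵥ v) * (2 / (v ⬝ᵥ v)) * (v ⬝ᵥ v) = 2 / (v ⬝ᵥ v) + 2 / (v ⬝ᵥ v) := by
      field_simp
      ring
    rw [hQ, sub_mul, one_mul, mul_sub, mul_one]
    rw [smul_mul_smul_comm, hVV, smul_smul, hcc, add_smul]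
    abel
  -- trace of Q * D * Q
  have htrQDQ : trace (Q * D * Q) = 0 := by
    rw [Matrix.trace_mul_comm, ← Matrix.mul_assoc, hQQ, Matrix.one_mul]
    exact htrace
  -- trace of Dhat
  have htrDhat : ∑ i : Fin n, Dhat i i = ∑ i, l i := by
    calc ∑ i : Fin n, Dhat i i = trace Dhat := rfl
      _ = trace (U * Matrix.diagonal l * Uᵀ) := by rw [hDhat]
      _ = trace (Uᵀ * (U * Matrix.diagonal l)) := by rw [Matrix.trace_mul_comm]
      _ = trace (Uᵀ * U * Matrix.diagonal l) := by rw [Matrix.mul_assoc]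
      _ = ∑ i, l i := by rw [hU, Matrix.one_mul, trace_diagonal]
  -- ξ(D)
  have hxiD : (Q * D * Q) (Fin.last n) (Fin.last n) = -∑ i, l i := by
    have h := htrQDQ
    rw [Matrix.trace, Fin.sum_univ_castSucc] at h
    simp only [Matrix.diag_apply] at h
    have h2 : ∑ i : Fin n, (Q * D * Q) i.castSucc i.castSucc = ∑ i, l i := by
      rw [← htrDhat]
      exact Finset.sum_congr rfl fun i _ => rfl
    linarith
  -- Ub entries
  have hUb_last : ∀ k, Ub (Fin.last n) k = if k = Fin.last n then 1 else 0 := by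
    intro k
    induction k using Fin.lastCases with
    | last => simp [Ub]
    | cast k' => simp [Ub, (Fin.castSucc_lt_last k').ne]
  have hUb_cc : ∀ (i' j' : Fin n), Ub i'.castSucc j'.castSucc = U i' j' := by
    intro i' j'; simp [Ub]
  have hUb_cl : ∀ (i' : Fin n), Ub i'.castSucc (Fin.last n) = 0 := by
    intro i'; simp [Ub]
  -- Ubᵀ * Ub = 1
  have hUbU : Ubᵀ * Ub = 1 := by
    ext i j
    rw [mul_apply]
    simp only [transpose_apply]
    rw [Fin.sum_univ_castSucc]
    induction i using Fin.lastCases with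
    | last =>
      induction j using Fin.lastCases with
      | last => simp [hUb_last, hUb_cl, one_apply]
      | cast j' =>
        simp [hUb_last, hUb_cl, one_apply, (Fin.castSucc_lt_last j').ne,
          (Fin.castSucc_lt_last j').ne']
    | cast i' =>
      induction j using Fin.lastCases with
      | last =>
        simp [hUb_last, hUb_cl, one_apply, (Fin.castSucc_lt_last i').ne,
          (Fin.castSucc_lt_last i').ne']
      | cast j' =>
        have hU' : (Uᵀ * U) i' j' = (1 : Matrix (Fin n) (Fin n) ℝ) i' j' := by rw [hU]
        rw [mul_apply] at hU'
        simp only [transpose_apply] at hU'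
        simp only [hUb_cc, hUb_last, (Fin.castSucc_lt_last j').ne, if_neg,
          mul_zero, add_zero]
        rw [hU']
        simp [one_apply, Fin.castSucc_inj]
  -- Sᵀ * S = 1
  have hSS : Sᵀ * S = 1 := by
    show (Q * Ub)ᵀ * (Q * Ub) = 1
    rw [transpose_mul, hQsymm]
    calc Ubᵀ * Q * (Q * Ub) = Ubᵀ * (Q * Q * Ub) := by
          rw [Matrix.mul_assoc, ← Matrix.mul_assoc Q Q Ub]
      _ = Ubᵀ * Ub := by rw [hQQ, Matrix.one_mul]
      _ = 1 := hUbU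
  -- trace Y
  have htrY : ∑ i, Y i i = ∑ i, mu i := by
    calc ∑ i, Y i i = trace Y := rfl
      _ = trace (S * Matrix.diagonal mu * Sᵀ) := rfl
      _ = trace (Sᵀ * (S * Matrix.diagonal mu)) := by rw [Matrix.trace_mul_comm]
      _ = trace (Sᵀ * S * Matrix.diagonal mu) := by rw [← Matrix.mul_assoc]
      _ = ∑ i, mu i := by rw [hSS, Matrix.one_mul, trace_diagonal]
  -- column sums of S
  have hScol : ∀ k, ∑ i, S i k = if k = Fin.last n then -α else 0 := by
    intro k
    calc ∑ i, S i k = ∑ i, ∑ p, Q i p * Ub p k := Finset.sum_congr rfl fun i _ => mul_apply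
      _ = ∑ p, ∑ i, Q i p * Ub p k := Finset.sum_comm
      _ = ∑ p, (∑ i, Q i p) * Ub p k := by
          apply Finset.sum_congr rfl; intro p _; rw [Finset.sum_mul]
      _ = ∑ p, (if p = Fin.last n then -α else 0) * Ub p k := by simp only [hQcolsum]
      _ = ∑ p, (if p = Fin.last n then -α * Ub p k else 0) := by
          apply Finset.sum_congr rfl; intro p _; rw [ite_mul, zero_mul]
      _ = -α * Ub (Fin.last n) k := by
          rw [Finset.sum_ite_eq' Finset.univ (Fin.last n) (fun p => -α * Ub p k)]
          simp
      _ = if k = Fin.last n then -α else 0 := by rw [hUb_last]; rw [mul_ite]; simp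
  -- entries of Y
  have hYe : ∀ i j, Y i j = ∑ m, S i m * mu m * S j m := by
    intro i j
    calc Y i j = ∑ m, (S * Matrix.diagonal mu) i m * Sᵀ m j := mul_apply
      _ = ∑ m, S i m * mu m * S j m := by
          apply Finset.sum_congr rfl; intro m _
          rw [Matrix.mul_diagonal, transpose_apply]
  have hmulast : mu (Fin.last n) = 0 := by rw [hmu_def]; simp
  -- total sum of Y
  have hYsum : ∑ i, ∑ j, Y i j = 0 := by
    calc ∑ i, ∑ j, Y i j = ∑ i, ∑ j, ∑ m, S i m * mu m * S j m := by
          simp only [hYe]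
      _ = ∑ i, ∑ m, S i m * mu m * ∑ j, S j m := by
          apply Finset.sum_congr rfl; intro i _
          rw [Finset.sum_comm]
          apply Finset.sum_congr rfl; intro m _
          rw [Finset.mul_sum]
      _ = ∑ m, ∑ i, S i m * mu m * ∑ j, S j m := Finset.sum_comm
      _ = ∑ m, (∑ i, S i m) * (mu m * ∑ j, S j m) := by
          apply Finset.sum_congr rfl; intro m _
          simp only [mul_assoc]
          rw [← Finset.sum_mul]
      _ = 0 := by
          apply Finset.sum_eq_zero
          intro m _
          rcases eq_or_ne m (Fin.last n) with h | h
          · subst h; rw [hmulast]; ring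
          · rw [hScol, if_neg h, zero_mul]
  -- ξ(Dcmds)
  have hDcmds_e : ∀ i j, Dcmds i j = Y i i + Y j j - 2 * Y i j := fun i j => rfl
  have hxiDcmds : (Q * Dcmds * Q) (Fin.last n) (Fin.last n) = 2 * ∑ i, mu i := by
    have hsum2 : ∑ i, ∑ j, Dcmds i j = 2 * ((n:ℝ) + 1) * ∑ i, mu i := by
      calc ∑ i, ∑ j, Dcmds i j = ∑ i, ∑ j, (Y i i + Y j j - 2 * Y i j) := by
            simp only [hDcmds_e]
        _ = ((n+1:ℕ):ℝ) * (∑ i, Y i i) + ((n+1:ℕ):ℝ) * (∑ i, Y i i) - 2 * ∑ i, ∑ j, Y i j :=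
            cmds_aux_sum Y
        _ = 2 * ((n:ℝ) + 1) * ∑ i, mu i := by rw [htrY, hYsum]; push_cast; ring
    calc (Q * Dcmds * Q) (Fin.last n) (Fin.last n)
        = ∑ j, (∑ i, Q (Fin.last n) i * Dcmds i j) * Q j (Fin.last n) := by
          rw [mul_apply]
          apply Finset.sum_congr rfl; intro j _
          rw [mul_apply]
      _ = ∑ j, ∑ i, (1 / α ^ 2) * Dcmds i j := by
          have hinv : (1:ℝ)/α^2 = (1/α)*(1/α) := by field_simp <;> ring
          apply Finset.sum_congr rfl; intro j _
          rw [hQlast', Finset.sum_mul]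
          apply Finset.sum_congr rfl; intro i _
          rw [hQlast, hinv]
          ring
      _ = (1 / α ^ 2) * ∑ i, ∑ j, Dcmds i j := by
          rw [Finset.sum_comm, Finset.mul_sum]
          apply Finset.sum_congr rfl; intro i _
          rw [Finset.mul_sum]
      _ = 2 * ∑ i, mu i := by
          rw [hsum2, hα2]
          have : (n:ℝ) + 1 ≠ 0 := by positivity
          field_simp
  -- final combination
  have hdiff : (Q * D * Q) (Fin.last n) (Fin.last n)
      - (Q * Dcmds * Q) (Fin.last n) (Fin.last n) = C2 := by
    rw [hxiD, hxiDcmds]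
    have hC2 : C2 = -∑ i, lamBar i := rfl
    rw [hC2, hlam_def, hmu_def]
    rw [Fin.sum_univ_castSucc, Fin.sum_univ_castSucc]
    simp only [Fin.lastCases_castSucc, Fin.lastCases_last, add_zero]
    rw [Finset.mul_sum, ← Finset.sum_neg_distrib, ← Finset.sum_sub_distrib,
      ← Finset.sum_neg_distrib]
    apply Finset.sum_congr rfl
    intro i _
    by_cases h : l i > 0 ∨ r < (i : ℕ) + 1
    · rw [if_pos h, if_pos h]; ring
    · rw [if_neg h, if_neg h]; ring
  rw [hdiff]
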